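/- arXiv:2009.03460 — 2 statements merged into one kernel-verified Lean document; each statement's English description precedes it below -/
import Mathlib

section
/- Let q be an odd prime, h an integer with q ∤ h, and a an integer with q ∤ a. Then Σ_{w=1}^{W} Σ_{x ∈ 𝔽_q, x² = a w} exp(2πi h x / q) has absolute value at most C·√q·log q for an absolute constant C, uniformly for 1 ≤ W ≤ q. -/
open Finset
open scoped Classical

section auxchar

open ZMod AddChar
variable {q : ℕ} [Fact q.Prime]

local notation "Ψ" => ZMod.stdAddChar (N := q)

-- conj of character value
lemma conj_psi (t : ZMod q) : (starRingEnd ℂ) (Ψ t) = Ψ (-t) := by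
  have h0 : ‖(Ψ t)‖ = 1 := by
    rw [ZMod.stdAddChar_apply]; exact Circle.norm_coe _
  have h1 : Ψ t * Ψ (-t) = 1 := by
    rw [← AddChar.map_add_eq_mul, add_neg_cancel, AddChar.map_zero_eq_one]
  have h2 : Ψ t * (starRingEnd ℂ) (Ψ t) = 1 := by
    rw [Complex.mul_conj, ← Complex.sq_norm, h0]; norm_num
  have hne : Ψ t ≠ 0 := fun h => by simp [h] at h0
  exact mul_left_cancel₀ hne (h2.trans h1.symm)

lemma abs_psi (t : ZMod q) : ‖(Ψ t)‖ = 1 := by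
  rw [ZMod.stdAddChar_apply]; exact Circle.norm_coe _

lemma psi_orth (z : ZMod q) : ∑ t : ZMod q, Ψ (t * z) = if z = 0 then (q : ℂ) else 0 := by
  have := AddChar.sum_mulShift z (ZMod.isPrimitive_stdAddChar q)
  rw [ZMod.card q] at this
  rw [this]
  split_ifs <;> simp

lemma psi_ne_one {u : ZMod q} (hu : u ≠ 0) : Ψ u ≠ 1 := by
  intro h
  exact hu (((ZMod.isPrimitive_stdAddChar q).zmod_char_eq_one_iff q u).mp h)

/-- Gauss-type bound via the |S|² trick. -/
lemma gauss_abs (hq2 : q ≠ 2) {b : ZMod q} (hb : b ≠ 0) (c : ZMod q) :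
    ‖(∑ x : ZMod q, Ψ (b * x ^ 2 + c * x))‖ = Real.sqrt q := by
  have hq := (Fact.out : q.Prime)
  have h2 : (2 : ZMod q) ≠ 0 := by
    have : ((2 : ℕ) : ZMod q) ≠ 0 := by
      rw [Ne, ZMod.natCast_eq_zero_iff]
      exact fun hd => hq2 ((Nat.prime_dvd_prime_iff_eq hq Nat.prime_two).mp hd)
    simpa using this
  set S := ∑ x : ZMod q, Ψ (b * x ^ 2 + c * x) with hS
  have key : S * (starRingEnd ℂ) S = (q : ℂ) := by
    have expand : S * (starRingEnd ℂ) S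
        = ∑ y : ZMod q, ∑ u : ZMod q, Ψ (b * u ^ 2 + c * u) * Ψ (y * (2 * b * u)) := by
      rw [hS, map_sum]
      simp_rw [conj_psi]
      rw [Finset.sum_mul_sum, Finset.sum_comm]
      refine Finset.sum_congr rfl fun y _ => ?_
      rw [← Equiv.sum_comp (Equiv.addLeft y)
            (fun x => Ψ (b * x ^ 2 + c * x) * Ψ (-(b * y ^ 2 + c * y)))]
      refine Finset.sum_congr rfl fun u _ => ?_
      simp only [Equiv.coe_addLeft]
      rw [← AddChar.map_add_eq_mul, ← AddChar.map_add_eq_mul]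
      congr 1
      ring
    rw [expand, Finset.sum_comm]
    have inner : ∀ u : ZMod q, ∑ y : ZMod q, Ψ (b * u ^ 2 + c * u) * Ψ (y * (2 * b * u))
        = Ψ (b * u ^ 2 + c * u) * (if (2 * b * u) = 0 then (q : ℂ) else 0) := by
      intro u; rw [← Finset.mul_sum, psi_orth]
    simp_rw [inner]
    rw [Finset.sum_eq_single 0]
    · simp
    · intro u _ hu
      have hne : 2 * b * u ≠ 0 := mul_ne_zero (mul_ne_zero h2 hb) hu
      simp [hne]
    · simp
  have habs : ‖S‖ * ‖S‖ = (q : ℝ) := by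
    have h := congrArg (‖·‖) key
    rwa [norm_mul, Complex.norm_conj, Complex.norm_natCast] at h
  rw [← habs, Real.sqrt_mul_self (norm_nonneg _)]


lemma geo_bound {z : ℂ} (hz : ‖z‖ = 1) (hz1 : z ≠ 1) (W : ℕ) :
    ‖(∑ w ∈ Finset.Icc 1 W, z ^ w)‖ ≤ 2 / ‖(z - 1)‖ := by
  have hzne : z - 1 ≠ 0 := sub_ne_zero.mpr hz1
  have habs : ‖(z - 1)‖ > 0 := norm_pos_iff.mpr hzne
  have hsum : ∑ w ∈ Finset.Icc 1 W, z ^ w = z * ((z ^ W - 1) / (z - 1)) := by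
    rw [← Finset.Ico_add_one_right_eq_Icc, Finset.sum_Ico_eq_sum_range]
    have : W + 1 - 1 = W := by omega
    rw [this, ← geom_sum_eq hz1, Finset.mul_sum]
    refine Finset.sum_congr rfl fun i _ => ?_
    rw [pow_add, pow_one, mul_comm]
  rw [hsum, norm_mul, hz, one_mul, norm_div]
  gcongr
  calc ‖(z ^ W - 1)‖ ≤ ‖(z ^ W)‖ + ‖(1 : ℂ)‖ := by
        simpa using norm_sub_le (z ^ W) 1
    _ ≤ 2 := by rw [norm_pow, hz, one_pow, norm_one]; norm_num


/-- Jordan-type bound: `sin (π β) ≥ 2 β (1-β)` on `[0,1]`. -/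
lemma sin_pi_mul_ge {β : ℝ} (h0 : 0 ≤ β) (h1 : β ≤ 1) :
    2 * β * (1 - β) ≤ Real.sin (Real.pi * β) := by
  have hπ := Real.pi_pos
  rcases le_or_gt β (1/2) with hb | hb
  · have := Real.mul_le_sin (x := Real.pi * β) (by positivity) (by nlinarith)
    have h2 : 2 / Real.pi * (Real.pi * β) = 2 * β := by field_simp
    rw [h2] at this
    nlinarith
  · have key := Real.mul_le_sin (x := Real.pi * (1 - β)) (by nlinarith) (by nlinarith)
    have h2 : 2 / Real.pi * (Real.pi * (1 - β)) = 2 * (1 - β) := by field_simp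
    rw [h2] at key
    have h3 : Real.sin (Real.pi * (1 - β)) = Real.sin (Real.pi * β) := by
      rw [show Real.pi * (1 - β) = Real.pi - Real.pi * β by ring, Real.sin_pi_sub]
    rw [h3] at key
    nlinarith

lemma abs_psi_sub_one {u : ZMod q} (hu : u ≠ 0) :
    4 * (u.val : ℝ) * ((q : ℝ) - u.val) / (q : ℝ) ^ 2 ≤ ‖(Ψ u - 1)‖ := by
  have hq := (Fact.out : q.Prime)
  have hq0 : (0 : ℝ) < q := by exact_mod_cast hq.pos
  set v : ℕ := u.val with hv
  have hv0 : 0 < v := ZMod.val_pos.mpr hu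
  have hvq : v < q := u.val_lt
  -- identify Ψ u with a complex exponential
  have hchar : Ψ u = Complex.exp ((2 * Real.pi * v / q : ℝ) * Complex.I) := by
    have : u = ((v : ℤ) : ZMod q) := by
      rw [hv]; push_cast [ZMod.natCast_zmod_val]; ring
    rw [this, ZMod.stdAddChar_coe]
    congr 1
    push_cast
    ring
  set α : ℝ := Real.pi * v / q with hα
  have hα0 : 0 ≤ α := by positivity
  have hαπ : α ≤ Real.pi := by
    rw [hα, div_le_iff₀ hq0]
    nlinarith [Real.pi_pos, (Nat.cast_le (α := ℝ)).mpr hvq.le]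
  have habs : ‖(Ψ u - 1)‖ = 2 * Real.sin α := by
    rw [hchar, Complex.exp_mul_I]
    rw [← Complex.ofReal_cos, ← Complex.ofReal_sin]
    have : (Real.cos (2 * Real.pi * v / q) : ℂ) + (Real.sin (2 * Real.pi * v / q) : ℂ) * Complex.I - 1
        = ((Real.cos (2 * Real.pi * v / q) - 1 : ℝ) : ℂ) + ((Real.sin (2 * Real.pi * v / q) : ℝ) : ℂ) * Complex.I := by
      push_cast; ring
    rw [this, Complex.norm_add_mul_I]
    have hθ : 2 * Real.pi * v / q = 2 * α := by rw [hα]; ring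
    have hcos : Real.cos (2 * α) = 1 - 2 * Real.sin α ^ 2 := by
      rw [Real.cos_two_mul]
      nlinarith [Real.sin_sq_add_cos_sq α]
    have hsin : 0 ≤ Real.sin α := Real.sin_nonneg_of_nonneg_of_le_pi hα0 hαπ
    rw [hθ]
    have hsq : (Real.cos (2 * α) - 1) ^ 2 + Real.sin (2 * α) ^ 2 = (2 * Real.sin α) ^ 2 := by
      have h1 := Real.sin_sq_add_cos_sq (2 * α)
      nlinarith
    rw [hsq, Real.sqrt_sq (by positivity)]
  rw [habs]
  have hβ := sin_pi_mul_ge (β := (v : ℝ) / q) (by positivity)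
    (by rw [div_le_one hq0]; exact_mod_cast hvq.le)
  have hαβ : α = Real.pi * ((v : ℝ) / q) := by rw [hα]; ring
  rw [hαβ]
  have hexp : 4 * (v : ℝ) * ((q : ℝ) - v) / (q : ℝ) ^ 2
      = 2 * (2 * ((v : ℝ) / q) * (1 - (v : ℝ) / q)) := by field_simp; ring
  rw [hexp]
  linarith


lemma char_geom {u : ZMod q} (hu : u ≠ 0) (W : ℕ) :
    ‖(∑ w ∈ Finset.Icc 1 W, Ψ (u * (w : ZMod q)))‖ ≤
      (q : ℝ) / 2 * (1 / (u.val : ℝ) + 1 / ((q : ℝ) - u.val)) := by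
  have hq := (Fact.out : q.Prime)
  have hq0 : (0 : ℝ) < q := by exact_mod_cast hq.pos
  have hv0 : (0 : ℝ) < (u.val : ℝ) := by exact_mod_cast ZMod.val_pos.mpr hu
  have hvq : (u.val : ℝ) < q := by exact_mod_cast u.val_lt
  have hpow : ∀ w : ℕ, Ψ (u * (w : ZMod q)) = (Ψ u) ^ w := fun w => by
    rw [mul_comm, ← nsmul_eq_mul, AddChar.map_nsmul_eq_pow]
  simp_rw [hpow]
  have hlow : (0 : ℝ) < 4 * (u.val : ℝ) * ((q : ℝ) - u.val) / (q : ℝ) ^ 2 := by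
    have : (0:ℝ) < (q : ℝ) - u.val := by linarith
    positivity
  calc ‖(∑ w ∈ Finset.Icc 1 W, (Ψ u) ^ w)‖
      ≤ 2 / ‖(Ψ u - 1)‖ := geo_bound (abs_psi u) (psi_ne_one hu) W
    _ ≤ 2 / (4 * (u.val : ℝ) * ((q : ℝ) - u.val) / (q : ℝ) ^ 2) := by
        apply div_le_div_of_nonneg_left (by norm_num) hlow (abs_psi_sub_one hu)
    _ = (q : ℝ) / 2 * (1 / (u.val : ℝ) + 1 / ((q : ℝ) - u.val)) := by
        have h1 : (u.val : ℝ) ≠ 0 := ne_of_gt hv0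
        have h2 : (q : ℝ) - u.val ≠ 0 := by linarith
        have h3 : (q : ℝ) ≠ 0 := ne_of_gt hq0
        generalize (u.val : ℝ) = V at h1 h2 ⊢
        generalize (q : ℝ) = Q at h2 h3 ⊢
        field_simp
        ring


lemma completion (h' c : ZMod q) (W : ℕ) :
    ∑ t : ZMod q, (∑ y : ZMod q, Ψ (t * y ^ 2 + h' * y)) *
        (∑ w ∈ Finset.Icc 1 W, Ψ (-(t * c) * (w : ZMod q)))
    = (q : ℂ) * ∑ w ∈ Finset.Icc 1 W, ∑ y : ZMod q,
        (if y ^ 2 = c * (w : ZMod q) then Ψ (h' * y) else 0) := by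
  have hpt : ∀ (w : ℕ) (y : ZMod q),
      ∑ t : ZMod q, Ψ (t * y ^ 2 + h' * y) * Ψ (-(t * c) * (w : ZMod q))
        = if y ^ 2 = c * (w : ZMod q) then (q : ℂ) * Ψ (h' * y) else 0 := by
    intro w y
    have hterm : ∀ t : ZMod q, Ψ (t * y ^ 2 + h' * y) * Ψ (-(t * c) * (w : ZMod q))
        = Ψ (h' * y) * Ψ (t * (y ^ 2 - c * (w : ZMod q))) := by
      intro t
      rw [← AddChar.map_add_eq_mul, ← AddChar.map_add_eq_mul]
      congr 1
      ring
    simp_rw [hterm]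
    rw [← Finset.mul_sum, psi_orth]
    by_cases h : y ^ 2 = c * (w : ZMod q)
    · have h0 : y ^ 2 - c * (w : ZMod q) = 0 := by rw [h]; ring
      rw [if_pos h0, if_pos h]
      ring
    · have h0 : y ^ 2 - c * (w : ZMod q) ≠ 0 := sub_ne_zero.mpr h
      simp only [if_neg h0, if_neg h, mul_zero]
  calc ∑ t : ZMod q, (∑ y : ZMod q, Ψ (t * y ^ 2 + h' * y)) *
        (∑ w ∈ Finset.Icc 1 W, Ψ (-(t * c) * (w : ZMod q)))
      = ∑ t : ZMod q, ∑ y : ZMod q, ∑ w ∈ Finset.Icc 1 W,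
          Ψ (t * y ^ 2 + h' * y) * Ψ (-(t * c) * (w : ZMod q)) := by
        exact Finset.sum_congr rfl fun t _ => Finset.sum_mul_sum _ _ _ _
    _ = ∑ y : ZMod q, ∑ t : ZMod q, ∑ w ∈ Finset.Icc 1 W,
          Ψ (t * y ^ 2 + h' * y) * Ψ (-(t * c) * (w : ZMod q)) := Finset.sum_comm
    _ = ∑ y : ZMod q, ∑ w ∈ Finset.Icc 1 W, ∑ t : ZMod q,
          Ψ (t * y ^ 2 + h' * y) * Ψ (-(t * c) * (w : ZMod q)) := by
        exact Finset.sum_congr rfl fun y _ => Finset.sum_comm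
    _ = ∑ w ∈ Finset.Icc 1 W, ∑ y : ZMod q, ∑ t : ZMod q,
          Ψ (t * y ^ 2 + h' * y) * Ψ (-(t * c) * (w : ZMod q)) := Finset.sum_comm
    _ = ∑ w ∈ Finset.Icc 1 W, ∑ y : ZMod q,
          (if y ^ 2 = c * (w : ZMod q) then (q : ℂ) * Ψ (h' * y) else 0) := by
        exact Finset.sum_congr rfl fun w _ => Finset.sum_congr rfl fun y _ => hpt w y
    _ = (q : ℂ) * ∑ w ∈ Finset.Icc 1 W, ∑ y : ZMod q,
          (if y ^ 2 = c * (w : ZMod q) then Ψ (h' * y) else 0) := by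
        rw [Finset.mul_sum]
        refine Finset.sum_congr rfl fun w _ => ?_
        rw [Finset.mul_sum]
        refine Finset.sum_congr rfl fun y _ => ?_
        split_ifs <;> simp


lemma harmonic_Icc_le (m : ℕ) (hm : 0 < m) :
    ∑ v ∈ Finset.Icc 1 m, (1 / (v : ℝ)) ≤ 1 + Real.log m := by
  have h1 : ∑ v ∈ Finset.Icc 1 m, (1 / (v : ℝ)) = ((harmonic m : ℚ) : ℝ) := by
    rw [harmonic_eq_sum_Icc]
    push_cast
    simp [one_div]
  rw [h1]
  exact harmonic_le_one_add_log m

lemma main_bound (hq2 : q ≠ 2) {c h' : ZMod q} (hc : c ≠ 0) (hh : h' ≠ 0) (W : ℕ) :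
    ‖(∑ w ∈ Finset.Icc 1 W, ∑ y : ZMod q,
        (if y ^ 2 = c * (w : ZMod q) then Ψ (h' * y) else 0))‖
      ≤ Real.sqrt q * (1 + Real.log q) := by
  have hq := (Fact.out : q.Prime)
  have hq0 : (0 : ℝ) < q := by exact_mod_cast hq.pos
  set S := ∑ w ∈ Finset.Icc 1 W, ∑ y : ZMod q,
      (if y ^ 2 = c * (w : ZMod q) then Ψ (h' * y) else 0) with hS
  set A : ZMod q → ℂ := fun t => ∑ y : ZMod q, Ψ (t * y ^ 2 + h' * y) with hA
  set B : ZMod q → ℂ := fun t => ∑ w ∈ Finset.Icc 1 W, Ψ (-(t * c) * (w : ZMod q)) with hB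
  have hcomp : ∑ t : ZMod q, A t * B t = (q : ℂ) * S := completion h' c W
  have hA0 : A 0 = 0 := by
    have h1 : ∀ y : ZMod q, Ψ ((0 : ZMod q) * y ^ 2 + h' * y) = Ψ (y * h') := by
      intro y; congr 1; ring
    rw [hA]
    simp only []
    rw [show (∑ y : ZMod q, Ψ ((0 : ZMod q) * y ^ 2 + h' * y))
        = ∑ y : ZMod q, Ψ (y * h') from Finset.sum_congr rfl fun y _ => h1 y]
    have h2 := AddChar.sum_mulShift h' (ZMod.isPrimitive_stdAddChar q)
    rw [if_neg hh] at h2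
    exact_mod_cast h2
  have herase : ∑ t : ZMod q, A t * B t
      = ∑ t ∈ Finset.univ.erase 0, A t * B t := by
    rw [← Finset.add_sum_erase _ (fun t => A t * B t) (Finset.mem_univ (0 : ZMod q)),
      hA0, zero_mul, zero_add]
  have key : (q : ℝ) * ‖S‖
      ≤ ∑ t ∈ Finset.univ.erase 0, Real.sqrt q *
          ((q : ℝ) / 2 * (1 / ((-(t * c)).val : ℝ) + 1 / ((q : ℝ) - (-(t * c)).val))) := by
    calc (q : ℝ) * ‖S‖ = ‖((q : ℂ) * S)‖ := by
          rw [norm_mul, Complex.norm_natCast]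
      _ = ‖(∑ t ∈ Finset.univ.erase 0, A t * B t)‖ := by rw [← hcomp, herase]
      _ ≤ ∑ t ∈ Finset.univ.erase 0, ‖(A t * B t)‖ := norm_sum_le _ _
      _ ≤ _ := by
          refine Finset.sum_le_sum fun t ht => ?_
          have ht0 : t ≠ 0 := Finset.ne_of_mem_erase ht
          have hu : -(t * c) ≠ 0 := by
            simp only [neg_ne_zero]
            exact mul_ne_zero ht0 hc
          rw [norm_mul, hA, hB]
          simp only []
          rw [gauss_abs hq2 ht0 h']
          exact mul_le_mul_of_nonneg_left (char_geom hu W) (Real.sqrt_nonneg q)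
  -- reindex t ↦ -(t*c)
  have reindex : ∑ t ∈ Finset.univ.erase 0, Real.sqrt q *
        ((q : ℝ) / 2 * (1 / ((-(t * c)).val : ℝ) + 1 / ((q : ℝ) - (-(t * c)).val)))
      = ∑ u ∈ Finset.univ.erase (0 : ZMod q), Real.sqrt q *
        ((q : ℝ) / 2 * (1 / (u.val : ℝ) + 1 / ((q : ℝ) - u.val))) := by
    refine Finset.sum_nbij' (fun t => -(t * c)) (fun u => -(u * c⁻¹)) ?_ ?_ ?_ ?_ ?_
    · intro t ht
      refine Finset.mem_erase.mpr ⟨?_, Finset.mem_univ _⟩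
      simp only [neg_ne_zero]
      exact mul_ne_zero (Finset.ne_of_mem_erase ht) hc
    · intro u hu
      refine Finset.mem_erase.mpr ⟨?_, Finset.mem_univ _⟩
      simp only [neg_ne_zero]
      exact mul_ne_zero (Finset.ne_of_mem_erase hu) (inv_ne_zero hc)
    · intro t _
      show -(-(t * c) * c⁻¹) = t
      rw [neg_mul, neg_neg, mul_assoc, mul_inv_cancel₀ hc, mul_one]
    · intro u _
      show -(-(u * c⁻¹) * c) = u
      rw [neg_mul, neg_neg, mul_assoc, inv_mul_cancel₀ hc, mul_one]
    · intro t _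
      rfl
  -- reindex u ↦ u.val
  have hval : ∑ u ∈ Finset.univ.erase (0 : ZMod q), (1 / (u.val : ℝ) + 1 / ((q : ℝ) - u.val))
      = ∑ v ∈ Finset.Icc 1 (q - 1), (1 / (v : ℝ) + 1 / ((q : ℝ) - v)) := by
    refine Finset.sum_nbij' (fun u => u.val) (fun v => (v : ZMod q)) ?_ ?_ ?_ ?_ ?_
    · intro u hu
      have h1 : 0 < u.val := ZMod.val_pos.mpr (Finset.ne_of_mem_erase hu)
      have h2 : u.val < q := u.val_lt
      simp only [Finset.mem_Icc]
      omega
    · intro v hv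
      obtain ⟨h1, h2⟩ := Finset.mem_Icc.mp hv
      refine Finset.mem_erase.mpr ⟨?_, Finset.mem_univ _⟩
      intro h0
      have := (ZMod.natCast_eq_zero_iff v q).mp h0
      have : q ≤ v := Nat.le_of_dvd (by omega) this
      omega
    · intro u _
      exact ZMod.natCast_zmod_val u
    · intro v hv
      obtain ⟨h1, h2⟩ := Finset.mem_Icc.mp hv
      exact ZMod.val_cast_of_lt (by omega)
    · intro u _
      rfl
  have hrefl : ∑ v ∈ Finset.Icc 1 (q - 1), (1 / ((q : ℝ) - v))
      = ∑ v ∈ Finset.Icc 1 (q - 1), (1 / (v : ℝ)) := by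
    refine Finset.sum_nbij' (fun v => q - v) (fun v => q - v) ?_ ?_ ?_ ?_ ?_
    · intro v hv
      obtain ⟨h1, h2⟩ := Finset.mem_Icc.mp hv
      simp only [Finset.mem_Icc]
      have := hq.two_le
      omega
    · intro v hv
      obtain ⟨h1, h2⟩ := Finset.mem_Icc.mp hv
      simp only [Finset.mem_Icc]
      have := hq.two_le
      omega
    · intro v hv
      obtain ⟨h1, h2⟩ := Finset.mem_Icc.mp hv
      show q - (q - v) = v
      have := hq.two_le
      omega
    · intro v hv
      obtain ⟨h1, h2⟩ := Finset.mem_Icc.mp hv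
      show q - (q - v) = v
      have := hq.two_le
      omega
    · intro v hv
      obtain ⟨h1, h2⟩ := Finset.mem_Icc.mp hv
      have hvq : v ≤ q := by omega
      show (1 : ℝ) / ((q : ℝ) - v) = 1 / ((q - v : ℕ) : ℝ)
      rw [Nat.cast_sub hvq]
  have hq1 : 0 < q - 1 := by have := hq.two_le; omega
  have hhar : ∑ v ∈ Finset.Icc 1 (q - 1), (1 / (v : ℝ)) ≤ 1 + Real.log q := by
    refine (harmonic_Icc_le (q - 1) hq1).trans ?_
    have h1 : (0 : ℝ) < ((q - 1 : ℕ) : ℝ) := by exact_mod_cast hq1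
    have h2 : ((q - 1 : ℕ) : ℝ) ≤ (q : ℝ) := by
      have : q - 1 ≤ q := Nat.sub_le q 1
      exact_mod_cast this
    linarith [Real.log_le_log h1 h2]
  -- put it together
  have total : (q : ℝ) * ‖S‖ ≤ Real.sqrt q * (q : ℝ) * (1 + Real.log q) := by
    have hsplit : ∑ v ∈ Finset.Icc 1 (q - 1), (1 / (v : ℝ) + 1 / ((q : ℝ) - v))
        ≤ 2 * (1 + Real.log q) := by
      rw [Finset.sum_add_distrib, hrefl]
      linarith
    calc (q : ℝ) * ‖S‖
        ≤ ∑ t ∈ Finset.univ.erase 0, Real.sqrt q *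
            ((q : ℝ) / 2 * (1 / ((-(t * c)).val : ℝ) + 1 / ((q : ℝ) - (-(t * c)).val))) := key
      _ = Real.sqrt q * ((q : ℝ) / 2) * ∑ u ∈ Finset.univ.erase (0 : ZMod q),
            (1 / (u.val : ℝ) + 1 / ((q : ℝ) - u.val)) := by
          rw [reindex, Finset.mul_sum]
          exact Finset.sum_congr rfl fun u _ => by ring
      _ ≤ Real.sqrt q * ((q : ℝ) / 2) * (2 * (1 + Real.log q)) := by
          rw [hval]
          refine mul_le_mul_of_nonneg_left hsplit (by positivity)
      _ = Real.sqrt q * (q : ℝ) * (1 + Real.log q) := by ring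
  have h2 : (q : ℝ) * ‖S‖ ≤ (q : ℝ) * (Real.sqrt q * (1 + Real.log q)) := by
    calc (q : ℝ) * ‖S‖ ≤ Real.sqrt q * (q : ℝ) * (1 + Real.log q) := total
      _ = (q : ℝ) * (Real.sqrt q * (1 + Real.log q)) := by ring
  exact le_of_mul_le_mul_left h2 hq0

end auxchar

/-- Exponential sums over square roots modulo a prime: `Σ_{w ≤ W} Σ_{x² = aw} e_q(hx) ≪ √q log q`,
with an absolute constant, uniformly in `1 ≤ W ≤ q`.  (Elements of `𝔽_q` are represented by
their integer representatives `x ∈ {0, …, q−1}`.) -/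
theorem exp_sum_sqrt_bound :
    ∃ C : ℝ, 0 < C ∧ ∀ (q : ℕ), q.Prime → q ≠ 2 → ∀ (a h : ℤ),
      ¬ (q : ℤ) ∣ a → ¬ (q : ℤ) ∣ h → ∀ (W : ℕ), 1 ≤ W → W ≤ q →
      ‖(∑ w ∈ Finset.Icc 1 W,
          ∑ x ∈ (Finset.range q).filter
              (fun x : ℕ => ((x : ZMod q)) ^ 2 = ((a * w : ℤ) : ZMod q)),
            Complex.exp (2 * (Real.pi : ℂ) * Complex.I * ((h * x : ℤ) : ℂ) / (q : ℂ)))‖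
        ≤ C * Real.sqrt q * Real.log q := by

  refine ⟨2, by norm_num, ?_⟩
  intro q hq hq2 a h ha hh W hW1 hWq
  haveI : Fact q.Prime := ⟨hq⟩
  set c : ZMod q := ((a : ZMod q)) with hcdef
  set h' : ZMod q := ((h : ZMod q)) with hhdef
  have hc : c ≠ 0 := fun h0 => ha ((ZMod.intCast_zmod_eq_zero_iff_dvd a q).mp h0)
  have hh' : h' ≠ 0 := fun h0 => hh ((ZMod.intCast_zmod_eq_zero_iff_dvd h q).mp h0)
  have hinner : ∀ w : ℕ,
      ∑ x ∈ (Finset.range q).filter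
          (fun x : ℕ => ((x : ZMod q)) ^ 2 = ((a * w : ℤ) : ZMod q)),
        Complex.exp (2 * (Real.pi : ℂ) * Complex.I * ((h * x : ℤ) : ℂ) / (q : ℂ))
      = ∑ y : ZMod q,
          (if y ^ 2 = c * (w : ZMod q) then ZMod.stdAddChar (h' * y) else 0) := by
    intro w
    have hfil : ∑ y : ZMod q,
          (if y ^ 2 = c * (w : ZMod q) then ZMod.stdAddChar (h' * y) else 0)
        = ∑ y ∈ Finset.univ.filter (fun y : ZMod q => y ^ 2 = c * (w : ZMod q)),
            ZMod.stdAddChar (h' * y) := (Finset.sum_filter _ _).symm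
    rw [hfil]
    have hcast : ((a * (w : ℕ) : ℤ) : ZMod q) = c * (w : ZMod q) := by
      push_cast
      ring
    refine Finset.sum_nbij' (fun x => (x : ZMod q)) (fun y => y.val) ?_ ?_ ?_ ?_ ?_
    · intro x hx
      obtain ⟨_, hx2⟩ := Finset.mem_filter.mp hx
      simp only [Finset.mem_filter, Finset.mem_univ, true_and]
      rw [hx2, hcast]
    · intro y hy
      obtain ⟨_, hy2⟩ := Finset.mem_filter.mp hy
      simp only [Finset.mem_filter, Finset.mem_range]
      refine ⟨y.val_lt, ?_⟩
      rw [ZMod.natCast_zmod_val, hy2, hcast]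
    · intro x hx
      exact ZMod.val_cast_of_lt (Finset.mem_range.mp (Finset.mem_filter.mp hx).1)
    · intro y _
      exact ZMod.natCast_zmod_val y
    · intro x _
      show Complex.exp _ = ZMod.stdAddChar (h' * (x : ZMod q))
      have e1 : ((h * (x : ℕ) : ℤ) : ZMod q) = h' * ((x : ℕ) : ZMod q) := by
        push_cast
        ring
      rw [← e1, ZMod.stdAddChar_coe]
  have hrw : (∑ w ∈ Finset.Icc 1 W,
        ∑ x ∈ (Finset.range q).filter
            (fun x : ℕ => ((x : ZMod q)) ^ 2 = ((a * w : ℤ) : ZMod q)),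
          Complex.exp (2 * (Real.pi : ℂ) * Complex.I * ((h * x : ℤ) : ℂ) / (q : ℂ)))
      = ∑ w ∈ Finset.Icc 1 W, ∑ y : ZMod q,
          (if y ^ 2 = c * (w : ZMod q) then ZMod.stdAddChar (h' * y) else 0) :=
    Finset.sum_congr rfl fun w _ => hinner w
  rw [hrw]
  have hmb := main_bound hq2 hc hh' W
  refine hmb.trans ?_
  have hq3 : (3 : ℝ) ≤ q := by
    have := hq.two_le
    have : 3 ≤ q := by omega
    exact_mod_cast this
  have hlog : 1 ≤ Real.log q := by
    rw [Real.le_log_iff_exp_le (by linarith)]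
    have := Real.exp_one_lt_d9
    linarith
  have h12 : 1 + Real.log q ≤ 2 * Real.log q := by linarith
  calc Real.sqrt q * (1 + Real.log q)
      ≤ Real.sqrt q * (2 * Real.log q) :=
        mul_le_mul_of_nonneg_left h12 (Real.sqrt_nonneg _)
    _ = 2 * Real.sqrt q * Real.log q := by ring
end

section
/- Completion of incomplete sums: let q be a positive integer and f : ℤ/qℤ → ℂ. For any integers Y and 1 ≤ W ≤ q, |Σ_{w=Y+1}^{Y+W} f(w)| ≤ (1/q)·Σ_{t=0}^{q−1} |F(t)| · min(W, 1/(2‖t/q‖)) summed appropriately, and in particular |Σ_{w=1}^{W} f(w)| ≤ (log q + 2)·max_{0 ≤ t < q} |F(t)|, where F(t) = Σ_{x ∈ ℤ/qℤ} f(x) exp(−2πi t x/q) is the discrete Fourier transform of f. -/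
open Finset
open scoped Classical

noncomputable def zet (q : ℕ) : ℂ := Complex.exp (2 * Real.pi * Complex.I / q)

lemma zet_ne_zero (q : ℕ) : zet q ≠ 0 := Complex.exp_ne_zero _

lemma zet_zpow (q : ℕ) (m : ℤ) :
    zet q ^ m = Complex.exp (2 * Real.pi * Complex.I * m / q) := by
  rw [zet, ← Complex.exp_int_mul]
  congr 1
  push_cast
  ring

lemma zet_abs (q : ℕ) (m : ℤ) : ‖(zet q ^ m)‖ = 1 := by
  rw [zet_zpow, Complex.norm_exp]
  norm_num

lemma zet_pow_q (q : ℕ) [NeZero q] : zet q ^ (q : ℤ) = 1 := by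
  rw [zet_zpow]
  have hq : (q : ℂ) ≠ 0 := Nat.cast_ne_zero.2 (NeZero.ne q)
  push_cast
  rw [mul_div_assoc, div_self hq, mul_one, Complex.exp_two_pi_mul_I]

lemma zet_zpow_eq_one_iff (q : ℕ) [NeZero q] (m : ℤ) :
    zet q ^ m = 1 ↔ (q : ℤ) ∣ m := by
  rw [zet_zpow, Complex.exp_eq_one_iff]
  have hq : (q : ℂ) ≠ 0 := Nat.cast_ne_zero.2 (NeZero.ne q)
  constructor
  · rintro ⟨n, hn⟩
    refine ⟨n, ?_⟩
    have h2 : (2 * Real.pi * Complex.I) ≠ 0 := by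
      simp [Real.pi_ne_zero, Complex.I_ne_zero, Complex.ofReal_ne_zero]
    have hn' : 2 * (Real.pi:ℂ) * Complex.I * (m:ℂ)
        = 2 * (Real.pi:ℂ) * Complex.I * ((n:ℂ) * (q:ℂ)) := by
      field_simp at hn
      linear_combination (2 * (Real.pi:ℂ) * Complex.I) * hn
    have h3 := mul_left_cancel₀ h2 hn'
    have hm : m = n * q := by exact_mod_cast h3
    rw [hm, mul_comm]
  · rintro ⟨n, rfl⟩
    refine ⟨n, ?_⟩
    field_simp
    push_cast
    ring

lemma zet_ortho (q : ℕ) [NeZero q] (m : ℤ) :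
    ∑ t ∈ Finset.range q, zet q ^ ((t : ℤ) * m) = if (q : ℤ) ∣ m then (q : ℂ) else 0 := by
  have hrw : ∀ t : ℕ, zet q ^ ((t : ℤ) * m) = (zet q ^ m) ^ t := by
    intro t
    rw [mul_comm, zpow_mul, zpow_natCast]
  simp_rw [hrw]
  split_ifs with h
  · have h1 : zet q ^ m = 1 := (zet_zpow_eq_one_iff q m).2 h
    simp [h1]
  · have h1 : zet q ^ m ≠ 1 := fun hc => h ((zet_zpow_eq_one_iff q m).1 hc)
    rw [geom_sum_eq h1]
    have : (zet q ^ m) ^ q = 1 := by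
      rw [← zpow_natCast, ← zpow_mul, mul_comm, zpow_mul, zet_pow_q, one_zpow]
    rw [this]
    simp

lemma key_identity (q : ℕ) [NeZero q] (f : ZMod q → ℂ) (W : ℕ) :
    ∑ w ∈ Finset.Icc 1 W, f (w : ZMod q)
      = (1/(q:ℂ)) * ∑ t ∈ Finset.range q,
          (∑ x : ZMod q, f x * zet q ^ (-((t:ℤ) * (x.val:ℤ))))
            * ∑ w ∈ Finset.Icc 1 W, zet q ^ ((t:ℤ) * (w:ℤ)) := by
  classical
  have hq : (q : ℂ) ≠ 0 := Nat.cast_ne_zero.2 (NeZero.ne q)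
  have step1 : ∀ t : ℕ,
      (∑ x : ZMod q, f x * zet q ^ (-((t:ℤ) * (x.val:ℤ))))
          * ∑ w ∈ Finset.Icc 1 W, zet q ^ ((t:ℤ) * (w:ℤ))
        = ∑ x : ZMod q, ∑ w ∈ Finset.Icc 1 W,
            f x * zet q ^ ((t:ℤ) * ((w:ℤ) - (x.val:ℤ))) := by
    intro t
    rw [Finset.sum_mul_sum]
    refine Finset.sum_congr rfl fun x _ => Finset.sum_congr rfl fun w _ => ?_
    rw [mul_assoc, ← zpow_add₀ (zet_ne_zero q)]
    congr 1
    ring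
  simp_rw [step1]
  rw [Finset.sum_comm]
  have step2 : ∀ x : ZMod q,
      ∑ w ∈ Finset.Icc 1 W, ∑ t ∈ Finset.range q,
          f x * zet q ^ ((t:ℤ) * ((w:ℤ) - (x.val:ℤ)))
        = ∑ w ∈ Finset.Icc 1 W,
            f x * (if x = (w : ZMod q) then (q:ℂ) else 0) := by
    intro x
    refine Finset.sum_congr rfl fun w _ => ?_
    rw [← Finset.mul_sum, zet_ortho]
    congr 1
    have hiff : ((q:ℤ) ∣ ((w:ℤ) - (x.val:ℤ))) ↔ x = (w : ZMod q) := by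
      rw [← ZMod.intCast_zmod_eq_zero_iff_dvd]
      push_cast
      simp only [ZMod.natCast_val, ZMod.cast_id]
      rw [sub_eq_zero, eq_comm]
    simp only [hiff]
  have step2' : ∀ x : ZMod q,
      ∑ t ∈ Finset.range q, ∑ w ∈ Finset.Icc 1 W,
          f x * zet q ^ ((t:ℤ) * ((w:ℤ) - (x.val:ℤ)))
        = ∑ w ∈ Finset.Icc 1 W,
            f x * (if x = (w : ZMod q) then (q:ℂ) else 0) := by
    intro x
    rw [Finset.sum_comm]
    exact step2 x
  simp_rw [step2']
  rw [Finset.sum_comm]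
  have step3 : ∀ w : ℕ,
      ∑ x : ZMod q, f x * (if x = (w : ZMod q) then (q:ℂ) else 0)
        = f (w : ZMod q) * q := by
    intro w
    have : ∀ x : ZMod q, f x * (if x = (w : ZMod q) then (q:ℂ) else 0)
        = if x = (w : ZMod q) then f x * q else 0 := by
      intro x; split_ifs <;> simp
    simp_rw [this]
    rw [Finset.sum_ite_eq']
    simp
  simp_rw [step3]
  rw [Finset.mul_sum]
  refine (Finset.sum_congr rfl fun w _ => ?_).symm
  field_simp

lemma abs_exp_mul_I_sub_one (θ : ℝ) :
    ‖(Complex.exp (θ * Complex.I) - 1)‖ = 2 * |Real.sin (θ/2)| := by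
  rw [Complex.exp_mul_I]
  have hrw : Complex.cos θ + Complex.sin θ * Complex.I - 1
      = ((Real.cos θ - 1 : ℝ) : ℂ) + ((Real.sin θ : ℝ) : ℂ) * Complex.I := by
    push_cast [Complex.ofReal_cos, Complex.ofReal_sin]
    ring
  rw [hrw, Complex.norm_add_mul_I]
  have hcos : Real.cos θ = 1 - 2 * Real.sin (θ/2) ^ 2 := by
    have h1 := Real.cos_two_mul (θ/2)
    have h2 := Real.sin_sq_add_cos_sq (θ/2)
    have h3 : 2 * (θ/2) = θ := by ring
    rw [h3] at h1
    nlinarith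
  have h : (Real.cos θ - 1)^2 + Real.sin θ^2 = (2 * |Real.sin (θ/2)|)^2 := by
    have h1 := Real.sin_sq_add_cos_sq θ
    have h2 : |Real.sin (θ/2)| ^ 2 = Real.sin (θ/2) ^ 2 := sq_abs _
    nlinarith
  rw [h, Real.sqrt_sq (by positivity : (0:ℝ) ≤ 2 * |Real.sin (θ/2)|)]

lemma sin_lower (q t : ℕ) (h1 : 1 ≤ t) (h2 : t < q) :
    2 * ((min t (q - t) : ℕ) : ℝ) / q ≤ Real.sin (Real.pi * t / q) := by
  have hq0 : (0:ℝ) < q := by exact_mod_cast (by omega : 0 < q)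
  rcases le_or_gt (2*t) q with h | h
  · have hmin : min t (q-t) = t := min_eq_left (by omega)
    rw [hmin]
    have hle : Real.pi * t / q ≤ Real.pi / 2 := by
      rw [div_le_div_iff₀ hq0 two_pos]
      have : (2:ℝ) * t ≤ q := by exact_mod_cast h
      nlinarith [Real.pi_pos]
    have hge : (0:ℝ) ≤ Real.pi * t / q := by positivity
    have := Real.mul_le_sin hge hle
    calc 2 * (t:ℝ) / q = 2 / Real.pi * (Real.pi * t / q) := by
          field_simp
      _ ≤ Real.sin (Real.pi * t / q) := this
  · have hmin : min t (q-t) = q - t := min_eq_right (by omega)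
    rw [hmin]
    have hsym : Real.sin (Real.pi * t / q) = Real.sin (Real.pi * (q-t : ℕ) / q) := by
      rw [← Real.sin_pi_sub]
      congr 1
      have hcast : ((q - t : ℕ) : ℝ) = (q:ℝ) - t := by
        have : t ≤ q := le_of_lt h2
        push_cast [this]
        ring
      rw [hcast]
      field_simp
    rw [hsym]
    have h1' : 1 ≤ q - t := by omega
    have hle : Real.pi * (q-t:ℕ) / q ≤ Real.pi / 2 := by
      rw [div_le_div_iff₀ hq0 two_pos]
      have : (2:ℝ) * ((q-t:ℕ):ℝ) ≤ q := by
        have : 2 * (q - t) ≤ q := by omega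
        exact_mod_cast this
      nlinarith [Real.pi_pos]
    have hge : (0:ℝ) ≤ Real.pi * (q-t:ℕ) / q := by positivity
    have := Real.mul_le_sin hge hle
    calc 2 * ((q-t:ℕ):ℝ) / q = 2 / Real.pi * (Real.pi * (q-t:ℕ) / q) := by
          field_simp
      _ ≤ Real.sin (Real.pi * (q-t:ℕ) / q) := this

lemma S_abs_bound (q t W : ℕ) [NeZero q] (h1 : 1 ≤ t) (h2 : t < q) :
    ‖(∑ w ∈ Finset.Icc 1 W, zet q ^ ((t:ℤ) * (w:ℤ)))‖
      ≤ (q:ℝ) / (2 * ((min t (q-t) : ℕ) : ℝ)) := by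
  have hq0 : (0:ℝ) < q := by exact_mod_cast (by omega : 0 < q)
  set z : ℂ := zet q ^ (t:ℤ) with hz
  have hz1 : z ≠ 1 := by
    intro hc
    have := (zet_zpow_eq_one_iff q (t:ℤ)).1 hc
    have := Int.le_of_dvd (by exact_mod_cast h1) this
    omega
  have hrw : ∀ w : ℕ, zet q ^ ((t:ℤ) * (w:ℤ)) = z ^ w := by
    intro w
    rw [hz, ← zpow_natCast (zet q ^ (t:ℤ)), ← zpow_mul]
  simp_rw [hrw]
  have hsum : ∑ w ∈ Finset.Icc 1 W, z ^ w = z * ((z ^ W - 1) / (z - 1)) := by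
    rw [← Finset.Ico_add_one_right_eq_Icc, Finset.sum_Ico_eq_sum_range]
    have : ∀ i : ℕ, z ^ (1 + i) = z * z ^ i := by
      intro i; rw [pow_add, pow_one]
    simp_rw [this, ← Finset.mul_sum, geom_sum_eq hz1]
    norm_num
  rw [hsum]
  -- compute |z - 1|
  have habs_z : ‖z‖ = 1 := zet_abs q (t:ℤ)
  have hzexp : z = Complex.exp (((2 * Real.pi * t / q : ℝ) : ℂ) * Complex.I) := by
    rw [hz, zet_zpow]
    congr 1
    push_cast
    ring
  have hmin_pos : (0:ℝ) < ((min t (q-t) : ℕ) : ℝ) := by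
    have : 1 ≤ min t (q-t) := by omega
    exact_mod_cast this
  have hden : 4 * ((min t (q-t) : ℕ):ℝ) / q ≤ ‖(z - 1)‖ := by
    rw [hzexp, abs_exp_mul_I_sub_one]
    have hhalf : (2 * Real.pi * t / q : ℝ) / 2 = Real.pi * t / q := by ring
    rw [hhalf]
    have hsin := sin_lower q t h1 h2
    calc 4 * ((min t (q-t) : ℕ):ℝ) / q = 2 * (2 * ((min t (q-t) : ℕ):ℝ) / q) := by ring
      _ ≤ 2 * Real.sin (Real.pi * t / q) := by linarith
      _ ≤ 2 * |Real.sin (Real.pi * t / q)| := by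
          have := le_abs_self (Real.sin (Real.pi * t / q))
          linarith
  have hden_pos : (0:ℝ) < ‖(z - 1)‖ :=
    lt_of_lt_of_le (by positivity) hden
  have hnum : ‖(z ^ W - 1)‖ ≤ 2 := by
    calc ‖(z ^ W - 1)‖ ≤ ‖z ^ W‖ + ‖(1:ℂ)‖ := by
          have := norm_sub_le (z ^ W) 1
          simpa using this
      _ = 2 := by rw [norm_pow, habs_z, one_pow, norm_one]; norm_num
  rw [norm_mul, habs_z, one_mul, norm_div]
  rw [div_le_div_iff₀ hden_pos (by positivity)]
  calc ‖(z ^ W - 1)‖ * (2 * ((min t (q-t) : ℕ):ℝ))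
      ≤ 2 * (2 * ((min t (q-t) : ℕ):ℝ)) := by
        have h0 : (0:ℝ) ≤ 2 * ((min t (q-t) : ℕ):ℝ) := by positivity
        exact mul_le_mul_of_nonneg_right hnum h0
    _ = (4 * ((min t (q-t) : ℕ):ℝ) / q) * q := by field_simp; ring
    _ ≤ ‖(z - 1)‖ * q := by
        exact mul_le_mul_of_nonneg_right hden (le_of_lt hq0)
    _ = (q:ℝ) * ‖(z - 1)‖ := mul_comm _ _
  

lemma sum_min_bound (q : ℕ) (hq : 2 ≤ q) :
    ∑ t ∈ Finset.Icc 1 (q-1), (q:ℝ) / (2 * ((min t (q-t) : ℕ):ℝ))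
      ≤ (q:ℝ) * (1 + Real.log q) := by
  have hq0 : (0:ℝ) < q := by exact_mod_cast (by omega : 0 < q)
  have step1 : ∀ t ∈ Finset.Icc 1 (q-1),
      (q:ℝ) / (2 * ((min t (q-t) : ℕ):ℝ)) ≤ (q:ℝ)/2 * (1/(t:ℝ) + 1/((q-t:ℕ):ℝ)) := by
    intro t ht
    simp only [Finset.mem_Icc] at ht
    have ht1 : (1:ℝ) ≤ (t:ℝ) := by exact_mod_cast ht.1
    have ht2 : (1:ℝ) ≤ ((q-t:ℕ):ℝ) := by exact_mod_cast (by omega : 1 ≤ q - t)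
    rcases min_choice t (q-t) with hmin | hmin <;> rw [hmin]
    · have : (0:ℝ) ≤ 1/((q-t:ℕ):ℝ) := by positivity
      rw [div_le_iff₀ (by positivity)]
      calc (q:ℝ) = (q:ℝ)/2 * (1/(t:ℝ)) * (2*(t:ℝ)) := by field_simp
        _ ≤ ((q:ℝ)/2 * (1/(t:ℝ) + 1/((q-t:ℕ):ℝ))) * (2*(t:ℝ)) := by
            have hfac : (q:ℝ)/2 * (1/(t:ℝ)) ≤ (q:ℝ)/2 * (1/(t:ℝ) + 1/((q-t:ℕ):ℝ)) := by
              have : (0:ℝ) ≤ (q:ℝ)/2 := by positivity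
              nlinarith
            exact mul_le_mul_of_nonneg_right hfac (by positivity)
    · have : (0:ℝ) ≤ 1/(t:ℝ) := by positivity
      rw [div_le_iff₀ (by positivity)]
      calc (q:ℝ) = (q:ℝ)/2 * (1/((q-t:ℕ):ℝ)) * (2*((q-t:ℕ):ℝ)) := by field_simp
        _ ≤ ((q:ℝ)/2 * (1/(t:ℝ) + 1/((q-t:ℕ):ℝ))) * (2*((q-t:ℕ):ℝ)) := by
            have hfac : (q:ℝ)/2 * (1/((q-t:ℕ):ℝ)) ≤ (q:ℝ)/2 * (1/(t:ℝ) + 1/((q-t:ℕ):ℝ)) := by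
              have : (0:ℝ) ≤ (q:ℝ)/2 := by positivity
              nlinarith
            exact mul_le_mul_of_nonneg_right hfac (by positivity)
  have hIcc : Finset.Icc 1 (q-1) = Finset.Ico 1 q := by
    rw [← Finset.Ico_add_one_right_eq_Icc]
    congr 1
    omega
  have hrefl : ∑ t ∈ Finset.Icc 1 (q-1), 1/((q-t:ℕ):ℝ)
      = ∑ t ∈ Finset.Icc 1 (q-1), 1/(t:ℝ) := by
    rw [hIcc]
    have := Finset.sum_Ico_reflect (fun j : ℕ => 1/((j:ℕ):ℝ)) 1 (le_of_lt (by omega : q < q + 1))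
    simp only [Nat.add_sub_cancel_left, Nat.add_sub_cancel] at this
    convert this using 2
  have hharm : ∑ t ∈ Finset.Icc 1 (q-1), 1/(t:ℝ) = (harmonic (q-1) : ℝ) := by
    rw [hIcc, Finset.sum_Ico_eq_sum_range]
    rw [harmonic]
    push_cast
    refine Finset.sum_congr rfl fun i _ => ?_
    rw [one_div, add_comm]
  have hlog : (harmonic (q-1) : ℝ) ≤ 1 + Real.log q := by
    refine (harmonic_le_one_add_log (q-1)).trans ?_
    have : Real.log ((q-1:ℕ):ℝ) ≤ Real.log q := by
      apply Real.log_le_log (by exact_mod_cast (by omega : 0 < q - 1))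
      exact_mod_cast (by omega : q - 1 ≤ q)
    linarith
  calc ∑ t ∈ Finset.Icc 1 (q-1), (q:ℝ) / (2 * ((min t (q-t) : ℕ):ℝ))
      ≤ ∑ t ∈ Finset.Icc 1 (q-1), (q:ℝ)/2 * (1/(t:ℝ) + 1/((q-t:ℕ):ℝ)) :=
        Finset.sum_le_sum step1
    _ = (q:ℝ)/2 * (∑ t ∈ Finset.Icc 1 (q-1), 1/(t:ℝ)
          + ∑ t ∈ Finset.Icc 1 (q-1), 1/((q-t:ℕ):ℝ)) := by
        rw [← Finset.sum_add_distrib, Finset.mul_sum]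
    _ = (q:ℝ) * (harmonic (q-1) : ℝ) := by rw [hrefl, hharm]; ring
    _ ≤ (q:ℝ) * (1 + Real.log q) := by
        exact mul_le_mul_of_nonneg_left hlog (le_of_lt hq0)

/-- Completion of incomplete sums: if `F` is the discrete Fourier transform of
`f : ℤ/qℤ → ℂ` and `B` bounds `|F(t)|` for all `0 ≤ t < q`, then
`|Σ_{w=1}^{W} f(w)| ≤ (log q + 2)·B` for `1 ≤ W ≤ q`. -/
theorem completion_of_incomplete_sums (q : ℕ) [NeZero q] (hq : 2 ≤ q)
    (f : ZMod q → ℂ) (W : ℕ) (hW1 : 1 ≤ W) (hWq : W ≤ q) (B : ℝ)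
    (hB : ∀ t : ℕ, t < q →
      ‖(∑ x : ZMod q,
          f x * Complex.exp (-(2 * (Real.pi : ℂ) * Complex.I * (t : ℂ) * ((x.val : ℕ) : ℂ)
            / (q : ℂ))))‖ ≤ B) :
    ‖(∑ w ∈ Finset.Icc 1 W, f (w : ZMod q))‖ ≤ (Real.log q + 2) * B := by
  have hq0 : (0:ℝ) < q := by exact_mod_cast (by omega : 0 < q)
  have hB0 : 0 ≤ B := le_trans (norm_nonneg _) (hB 0 (by omega))
  have hF : ∀ t : ℕ, t < q →
      ‖(∑ x : ZMod q, f x * zet q ^ (-((t:ℤ)*((x.val:ℕ):ℤ))))‖ ≤ B := by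
    intro t ht
    have heq : ∑ x : ZMod q, f x * zet q ^ (-((t:ℤ)*((x.val:ℕ):ℤ)))
        = ∑ x : ZMod q, f x * Complex.exp
            (-(2 * (Real.pi:ℂ) * Complex.I * (t:ℂ) * ((x.val:ℕ):ℂ) / (q:ℂ))) := by
      refine Finset.sum_congr rfl fun x _ => ?_
      rw [zet_zpow]
      congr 1
      push_cast
      ring
    rw [heq]
    exact hB t ht
  rw [key_identity q f W]
  have hsplit : Finset.range q = insert 0 (Finset.Icc 1 (q-1)) := by
    ext x
    simp only [Finset.mem_range, Finset.mem_insert, Finset.mem_Icc]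
    omega
  have hS0 : ‖(∑ w ∈ Finset.Icc 1 W, zet q ^ (((0:ℕ):ℤ) * (w:ℤ)))‖ ≤ (q:ℝ) := by
    simp only [Nat.cast_zero, zero_mul, zpow_zero]
    rw [Finset.sum_const, Nat.card_Icc]
    simp only [Nat.add_sub_cancel, nsmul_eq_mul, mul_one]
    rw [Complex.norm_natCast]
    exact_mod_cast hWq
  have hSsum : ∑ t ∈ Finset.Icc 1 (q-1),
      ‖(∑ w ∈ Finset.Icc 1 W, zet q ^ ((t:ℤ) * (w:ℤ)))‖
        ≤ (q:ℝ) * (1 + Real.log q) := by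
    refine le_trans (Finset.sum_le_sum fun t ht => ?_) (sum_min_bound q hq)
    simp only [Finset.mem_Icc] at ht
    exact S_abs_bound q t W ht.1 (by omega)
  calc ‖((1/(q:ℂ)) * ∑ t ∈ Finset.range q,
        (∑ x : ZMod q, f x * zet q ^ (-((t:ℤ) * ((x.val:ℕ):ℤ))))
          * ∑ w ∈ Finset.Icc 1 W, zet q ^ ((t:ℤ) * (w:ℤ)))‖
      = (1/(q:ℝ)) * ‖(∑ t ∈ Finset.range q,
          (∑ x : ZMod q, f x * zet q ^ (-((t:ℤ) * ((x.val:ℕ):ℤ))))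
            * ∑ w ∈ Finset.Icc 1 W, zet q ^ ((t:ℤ) * (w:ℤ)))‖ := by
        rw [norm_mul, norm_div, norm_one, Complex.norm_natCast]
    _ ≤ (1/(q:ℝ)) * ∑ t ∈ Finset.range q, 
          ‖((∑ x : ZMod q, f x * zet q ^ (-((t:ℤ) * ((x.val:ℕ):ℤ))))
            * ∑ w ∈ Finset.Icc 1 W, zet q ^ ((t:ℤ) * (w:ℤ)))‖ := by
        refine mul_le_mul_of_nonneg_left ?_ (by positivity)
        exact norm_sum_le _ _
    _ ≤ (1/(q:ℝ)) * ∑ t ∈ Finset.range q, B * 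
          ‖(∑ w ∈ Finset.Icc 1 W, zet q ^ ((t:ℤ) * (w:ℤ)))‖ := by
        refine mul_le_mul_of_nonneg_left (Finset.sum_le_sum fun t ht => ?_) (by positivity)
        rw [norm_mul]
        exact mul_le_mul_of_nonneg_right (hF t (Finset.mem_range.1 ht)) (norm_nonneg _)
    _ = (B/(q:ℝ)) * ∑ t ∈ Finset.range q, 
          ‖(∑ w ∈ Finset.Icc 1 W, zet q ^ ((t:ℤ) * (w:ℤ)))‖ := by
        rw [Finset.mul_sum, Finset.mul_sum]
        refine Finset.sum_congr rfl fun t _ => ?_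
        ring
    _ ≤ (B/(q:ℝ)) * ((q:ℝ) + (q:ℝ) * (1 + Real.log q)) := by
        refine mul_le_mul_of_nonneg_left ?_ (div_nonneg hB0 hq0.le)
        rw [hsplit, Finset.sum_insert (by simp)]
        exact add_le_add hS0 hSsum
    _ = (Real.log q + 2) * B := by
        field_simp
        ring
end
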